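/- Let γ(s,t) be an arclength-parametrized inextensible flow of pseudo null curves in E⁴₁ with pseudo null Frenet frame {T, N, B₁, B₂}, curvatures k₁ = 1, k₂, k₃, flow ∂γ/∂t = α₁T + α₂N + α₃B₁ + α₄B₂ (so ∂α₁/∂s = α₄), and ψ₂ = ⟨∂N/∂t, B₂⟩. Then ∂²α₂/∂s² + ∂α₁/∂s + ∂(α₃k₃)/∂s + (∂α₃/∂s)k₃ + α₂k₂k₃ − α₄k₃² − ψ₂ = 0. -/

import Mathlib

/-!
Formalization of inextensible flows of partially null / pseudo null curves in
Minkowski space-time `E⁴₁` (ℝ⁴ with signature (-,+,+,+)).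
-/

open scoped ContDiff

noncomputable section

/-- The Minkowski bilinear form on `ℝ⁴` with signature `(-,+,+,+)`. -/
def mink (v w : Fin 4 → ℝ) : ℝ :=
  -(v 0 * w 0) + v 1 * w 1 + v 2 * w 2 + v 3 * w 3

/-- The Minkowski norm `‖v‖ = √|⟨v,v⟩|`. -/
def mnorm (v : Fin 4 → ℝ) : ℝ := Real.sqrt |mink v v|

lemma one_le_inf : (∞ : WithTop ℕ∞) ≠ 0 := by simp

section Helpers

variable {E : Type*} [NormedAddCommGroup E] [NormedSpace ℝ E]

lemma sliceS_contDiff (F : ℝ → ℝ → E)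
    (h : ContDiff ℝ (⊤ : ℕ∞) (fun p : ℝ × ℝ => F p.1 p.2)) (t : ℝ) :
    ContDiff ℝ (⊤ : ℕ∞) (fun x => F x t) :=
  h.comp (contDiff_id.prodMk contDiff_const)

lemma sliceT_contDiff (F : ℝ → ℝ → E)
    (h : ContDiff ℝ (⊤ : ℕ∞) (fun p : ℝ × ℝ => F p.1 p.2)) (s : ℝ) :
    ContDiff ℝ (⊤ : ℕ∞) (fun y => F s y) :=
  h.comp (contDiff_const.prodMk contDiff_id)

lemma pd1 (F : ℝ → ℝ → E)
    (h : ContDiff ℝ (⊤ : ℕ∞) (fun p : ℝ × ℝ => F p.1 p.2)) (s t : ℝ) :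
    HasDerivAt (fun x => F x t)
      (fderiv ℝ (fun p : ℝ × ℝ => F p.1 p.2) (s, t) (1, 0)) s := by
  have := ((h.differentiable one_le_inf (s, t)).hasFDerivAt).comp_hasDerivAt s
    ((hasDerivAt_id s).prodMk (hasDerivAt_const s t))
  exact this

lemma pd2 (F : ℝ → ℝ → E)
    (h : ContDiff ℝ (⊤ : ℕ∞) (fun p : ℝ × ℝ => F p.1 p.2)) (s t : ℝ) :
    HasDerivAt (fun y => F s y)
      (fderiv ℝ (fun p : ℝ × ℝ => F p.1 p.2) (s, t) (0, 1)) t := by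
  have := ((h.differentiable one_le_inf (s, t)).hasFDerivAt).comp_hasDerivAt t
    ((hasDerivAt_const t s).prodMk (hasDerivAt_id t))
  exact this

lemma clairaut (F : ℝ → ℝ → E)
    (h : ContDiff ℝ (⊤ : ℕ∞) (fun p : ℝ × ℝ => F p.1 p.2)) (s t : ℝ) :
    deriv (fun y => deriv (fun x => F x y) s) t
      = deriv (fun x => deriv (fun y => F x y) t) s := by
  set Fu : ℝ × ℝ → E := fun p => F p.1 p.2 with hFu
  have h' : ContDiff ℝ ∞ Fu := h
  have hf' : ContDiff ℝ ∞ (fderiv ℝ Fu) := (contDiff_infty_iff_fderiv.mp h').2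
  have hf'd : HasFDerivAt (fderiv ℝ Fu) (fderiv ℝ (fderiv ℝ Fu) (s, t)) (s, t) :=
    (hf'.differentiable one_le_inf (s, t)).hasFDerivAt
  have e1 : (fun y => deriv (fun x => F x y) s) = fun y => fderiv ℝ Fu (s, y) (1, 0) :=
    funext fun y => (pd1 F h s y).deriv
  have e2 : (fun x => deriv (fun y => F x y) t) = fun x => fderiv ℝ Fu (x, t) (0, 1) :=
    funext fun x => (pd2 F h x t).deriv
  have h2 : HasDerivAt (fun y => fderiv ℝ Fu (s, y))
      (fderiv ℝ (fderiv ℝ Fu) (s, t) (0, 1)) t :=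
    hf'd.comp_hasDerivAt t ((hasDerivAt_const t s).prodMk (hasDerivAt_id t))
  have h3 : HasDerivAt (fun y => fderiv ℝ Fu (s, y) (1, 0))
      (fderiv ℝ (fderiv ℝ Fu) (s, t) (0, 1) (1, 0)) t :=
    ((ContinuousLinearMap.apply ℝ E ((1 : ℝ), (0 : ℝ))).hasFDerivAt).comp_hasDerivAt t h2
  have h4 : HasDerivAt (fun x => fderiv ℝ Fu (x, t))
      (fderiv ℝ (fderiv ℝ Fu) (s, t) (1, 0)) s :=
    hf'd.comp_hasDerivAt s ((hasDerivAt_id s).prodMk (hasDerivAt_const s t))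
  have h5 : HasDerivAt (fun x => fderiv ℝ Fu (x, t) (0, 1))
      (fderiv ℝ (fderiv ℝ Fu) (s, t) (1, 0) (0, 1)) s :=
    ((ContinuousLinearMap.apply ℝ E ((0 : ℝ), (1 : ℝ))).hasFDerivAt).comp_hasDerivAt s h4
  have hsym := second_derivative_symmetric (f := Fu) (f' := fderiv ℝ Fu)
    (fun y => (h'.differentiable one_le_inf y).hasFDerivAt) hf'd ((0 : ℝ), (1 : ℝ)) ((1 : ℝ), (0 : ℝ))
  rw [e1, e2, h3.deriv, h5.deriv, hsym]

end Helpers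

lemma mink_add_left (v w u : Fin 4 → ℝ) : mink (v + w) u = mink v u + mink w u := by
  simp [mink]; ring

lemma mink_sub_left (v w u : Fin 4 → ℝ) : mink (v - w) u = mink v u - mink w u := by
  simp [mink]; ring

lemma mink_smul_left (a : ℝ) (v u : Fin 4 → ℝ) : mink (a • v) u = a * mink v u := by
  simp [mink, smul_eq_mul]; ring

lemma mink_neg_left (v u : Fin 4 → ℝ) : mink (-v) u = -mink v u := by
  simp [mink]; ring

theorem pde_N_component_pseudo_null
    (γ T N B₁ B₂ : ℝ → ℝ → (Fin 4 → ℝ))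
    (k₁ k₂ k₃ α₁ α₂ α₃ α₄ : ℝ → ℝ → ℝ)
    (ψ₂ : ℝ → ℝ → ℝ)
    (hγsmooth : ContDiff ℝ (⊤ : ℕ∞) (fun p : ℝ × ℝ => γ p.1 p.2))
    (hTsmooth : ContDiff ℝ (⊤ : ℕ∞) (fun p : ℝ × ℝ => T p.1 p.2))
    (hNsmooth : ContDiff ℝ (⊤ : ℕ∞) (fun p : ℝ × ℝ => N p.1 p.2))
    (hB₁smooth : ContDiff ℝ (⊤ : ℕ∞) (fun p : ℝ × ℝ => B₁ p.1 p.2))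
    (hB₂smooth : ContDiff ℝ (⊤ : ℕ∞) (fun p : ℝ × ℝ => B₂ p.1 p.2))
    (hk₂smooth : ContDiff ℝ (⊤ : ℕ∞) (fun p : ℝ × ℝ => k₂ p.1 p.2))
    (hk₃smooth : ContDiff ℝ (⊤ : ℕ∞) (fun p : ℝ × ℝ => k₃ p.1 p.2))
    (hα₁smooth : ContDiff ℝ (⊤ : ℕ∞) (fun p : ℝ × ℝ => α₁ p.1 p.2))
    (hα₂smooth : ContDiff ℝ (⊤ : ℕ∞) (fun p : ℝ × ℝ => α₂ p.1 p.2))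
    (hα₃smooth : ContDiff ℝ (⊤ : ℕ∞) (fun p : ℝ × ℝ => α₃ p.1 p.2))
    (hα₄smooth : ContDiff ℝ (⊤ : ℕ∞) (fun p : ℝ × ℝ => α₄ p.1 p.2))
    (hTT : ∀ s t : ℝ, mink (T s t) (T s t) = 1)
    (hB₁B₁ : ∀ s t : ℝ, mink (B₁ s t) (B₁ s t) = 1)
    (hNN : ∀ s t : ℝ, mink (N s t) (N s t) = 0)
    (hB₂B₂ : ∀ s t : ℝ, mink (B₂ s t) (B₂ s t) = 0)
    (hNB₂ : ∀ s t : ℝ, mink (N s t) (B₂ s t) = 1)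
    (hTN : ∀ s t : ℝ, mink (T s t) (N s t) = 0)
    (hTB₁ : ∀ s t : ℝ, mink (T s t) (B₁ s t) = 0)
    (hTB₂ : ∀ s t : ℝ, mink (T s t) (B₂ s t) = 0)
    (hNB₁ : ∀ s t : ℝ, mink (N s t) (B₁ s t) = 0)
    (hB₁B₂ : ∀ s t : ℝ, mink (B₁ s t) (B₂ s t) = 0)
    -- arclength parametrization and pseudo null Frenet equations (k₁ = 1)
    (hk₁ : ∀ s t : ℝ, k₁ s t = 1)
    (hT : ∀ s t : ℝ, T s t = deriv (fun x => γ x t) s)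
    (hunit : ∀ s t : ℝ, mnorm (deriv (fun x => γ x t) s) = 1)
    (hfr₁ : ∀ s t : ℝ, deriv (fun x => T x t) s = k₁ s t • N s t)
    (hfr₂ : ∀ s t : ℝ, deriv (fun x => N x t) s = k₂ s t • B₁ s t)
    (hfr₃ : ∀ s t : ℝ, deriv (fun x => B₁ x t) s = k₃ s t • N s t - k₂ s t • B₂ s t)
    (hfr₄ : ∀ s t : ℝ, deriv (fun x => B₂ x t) s = -(k₁ s t) • T s t - k₃ s t • B₁ s t)
    (hflow : ∀ s t : ℝ, deriv (fun x => γ s x) t =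
      α₁ s t • T s t + α₂ s t • N s t + α₃ s t • B₁ s t + α₄ s t • B₂ s t)
    -- inextensibility: ∂α₁/∂s = α₄
    (hinext : ∀ s t : ℝ, deriv (fun x => α₁ x t) s = α₄ s t)
    (hψ₂ : ∀ s t : ℝ, ψ₂ s t = mink (deriv (fun x => N s x) t) (B₂ s t)) :
    ∀ s t : ℝ,
      deriv (fun x => deriv (fun y => α₂ y t) x) s + deriv (fun x => α₁ x t) s +
      deriv (fun x => α₃ x t * k₃ x t) s + deriv (fun x => α₃ x t) s * k₃ s t +
      α₂ s t * k₂ s t * k₃ s t - α₄ s t * (k₃ s t) ^ 2 - ψ₂ s t = 0 := by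
  intro s t
  -- simplified Frenet equations (k₁ = 1)
  have hfr₁' : ∀ x, deriv (fun u => T u t) x = N x t := by
    intro x; rw [hfr₁, hk₁, one_smul]
  have hfr₄' : ∀ x, deriv (fun u => B₂ u t) x = -T x t - k₃ x t • B₁ x t := by
    intro x; rw [hfr₄, hk₁, neg_one_smul]
  -- differentiability of slices
  have dT : ∀ x, HasDerivAt (fun u => T u t) (N x t) x := fun x => by
    have := ((sliceS_contDiff T hTsmooth t).differentiable one_le_inf x).hasDerivAt
    rwa [hfr₁' x] at this
  have dN : ∀ x, HasDerivAt (fun u => N u t) (k₂ x t • B₁ x t) x := fun x => by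
    have := ((sliceS_contDiff N hNsmooth t).differentiable one_le_inf x).hasDerivAt
    rwa [hfr₂ x t] at this
  have dB₁ : ∀ x, HasDerivAt (fun u => B₁ u t) (k₃ x t • N x t - k₂ x t • B₂ x t) x := fun x => by
    have := ((sliceS_contDiff B₁ hB₁smooth t).differentiable one_le_inf x).hasDerivAt
    rwa [hfr₃ x t] at this
  have dB₂ : ∀ x, HasDerivAt (fun u => B₂ u t) (-T x t - k₃ x t • B₁ x t) x := fun x => by
    have := ((sliceS_contDiff B₂ hB₂smooth t).differentiable one_le_inf x).hasDerivAt
    rwa [hfr₄' x] at this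
  have cα₁ := sliceS_contDiff α₁ hα₁smooth t
  have cα₂ := sliceS_contDiff α₂ hα₂smooth t
  have cα₃ := sliceS_contDiff α₃ hα₃smooth t
  have cα₄ := sliceS_contDiff α₄ hα₄smooth t
  have ck₂ := sliceS_contDiff k₂ hk₂smooth t
  have ck₃ := sliceS_contDiff k₃ hk₃smooth t
  have dα₁ : ∀ x, HasDerivAt (fun u => α₁ u t) (α₄ x t) x := fun x => by
    have := ((cα₁.differentiable one_le_inf) x).hasDerivAt
    rwa [hinext x t] at this
  have dα₂ : ∀ x, HasDerivAt (fun u => α₂ u t)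
      (deriv (fun y => α₂ y t) x) x := fun x => ((cα₂.differentiable one_le_inf) x).hasDerivAt
  have dα₃ : ∀ x, HasDerivAt (fun u => α₃ u t)
      (deriv (fun y => α₃ y t) x) x := fun x => ((cα₃.differentiable one_le_inf) x).hasDerivAt
  have dα₄ : ∀ x, HasDerivAt (fun u => α₄ u t)
      (deriv (fun y => α₄ y t) x) x := fun x => ((cα₄.differentiable one_le_inf) x).hasDerivAt
  have dk₃ : ∀ x, HasDerivAt (fun u => k₃ u t)
      (deriv (fun y => k₃ y t) x) x := fun x => ((ck₃.differentiable one_le_inf) x).hasDerivAt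
  -- coefficients
  set μ₂ : ℝ → ℝ := fun x => α₁ x t + deriv (fun y => α₂ y t) x + α₃ x t * k₃ x t with hμ₂
  set μ₃ : ℝ → ℝ := fun x => α₂ x t * k₂ x t + deriv (fun y => α₃ y t) x - α₄ x t * k₃ x t
    with hμ₃
  set μ₄ : ℝ → ℝ := fun x => deriv (fun y => α₄ y t) x - α₃ x t * k₂ x t with hμ₄
  -- Step A : derivative of the flow in the s-direction
  have stepA : ∀ x, HasDerivAt
      (fun u => α₁ u t • T u t + α₂ u t • N u t + α₃ u t • B₁ u t + α₄ u t • B₂ u t)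
      (μ₂ x • N x t + μ₃ x • B₁ x t + μ₄ x • B₂ x t) x := by
    intro x
    have h := ((((dα₁ x).smul (dT x)).add ((dα₂ x).smul (dN x))).add
      ((dα₃ x).smul (dB₁ x))).add ((dα₄ x).smul (dB₂ x))
    refine h.congr_deriv ?_
    try simp only [hμ₂, hμ₃, hμ₄]
    ext i; simp only [Pi.add_apply, Pi.smul_apply, Pi.sub_apply, Pi.neg_apply, smul_eq_mul]; ring
  -- Step B : T_t = μ₂ • N + μ₃ • B₁ + μ₄ • B₂
  have stepB : ∀ x, deriv (fun y => T x y) t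
      = μ₂ x • N x t + μ₃ x • B₁ x t + μ₄ x • B₂ x t := by
    intro x
    have e : (fun y => T x y) = fun y => deriv (fun u => γ u y) x := by
      funext y; exact hT x y
    rw [e, clairaut γ hγsmooth x t]
    have e2 : (fun u => deriv (fun y => γ u y) t)
        = fun u => α₁ u t • T u t + α₂ u t • N u t + α₃ u t • B₁ u t + α₄ u t • B₂ u t := by
      funext u; exact hflow u t
    rw [e2, (stepA x).deriv]
  -- Step C : N_t as a derivative in s
  have stepC : deriv (fun y => N s y) t
      = deriv (fun x => μ₂ x • N x t + μ₃ x • B₁ x t + μ₄ x • B₂ x t) s := by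
    have e : (fun y => N s y) = fun y => deriv (fun u => T u y) s := by
      funext y; rw [hfr₁ s y, hk₁, one_smul]
    rw [e, clairaut T hTsmooth s t]
    congr 1
    funext x
    exact stepB x
  -- differentiability of μ's
  have cμ₂ : Differentiable ℝ μ₂ := by
    have h2 : Differentiable ℝ (deriv (fun y => α₂ y t)) :=
      ((contDiff_infty_iff_deriv.mp cα₂).2).differentiable one_le_inf
    exact ((cα₁.differentiable one_le_inf).add h2).add
      ((cα₃.differentiable one_le_inf).mul (ck₃.differentiable one_le_inf))
  have cμ₃ : Differentiable ℝ μ₃ := by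
    have h2 : Differentiable ℝ (deriv (fun y => α₃ y t)) :=
      ((contDiff_infty_iff_deriv.mp cα₃).2).differentiable one_le_inf
    exact (((cα₂.differentiable one_le_inf).mul (ck₂.differentiable one_le_inf)).add h2).sub
      ((cα₄.differentiable one_le_inf).mul (ck₃.differentiable one_le_inf))
  have cμ₄ : Differentiable ℝ μ₄ := by
    have h2 : Differentiable ℝ (deriv (fun y => α₄ y t)) :=
      ((contDiff_infty_iff_deriv.mp cα₄).2).differentiable one_le_inf
    exact h2.sub ((cα₃.differentiable one_le_inf).mul (ck₂.differentiable one_le_inf))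
  -- derivative of μ₂, with the individual pieces appearing in the goal
  have dμ₂ : HasDerivAt μ₂
      (deriv (fun x => α₁ x t) s + deriv (fun x => deriv (fun y => α₂ y t) x) s
        + deriv (fun x => α₃ x t * k₃ x t) s) s := by
    have h1 : HasDerivAt (fun x => α₁ x t) (deriv (fun x => α₁ x t) s) s :=
      ((cα₁.differentiable one_le_inf) s).hasDerivAt
    have h2 : HasDerivAt (fun x => deriv (fun y => α₂ y t) x)
        (deriv (fun x => deriv (fun y => α₂ y t) x) s) s := by
      have := (((contDiff_infty_iff_deriv.mp cα₂).2).differentiable one_le_inf s).hasDerivAt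
      exact this
    have h3 : HasDerivAt (fun x => α₃ x t * k₃ x t)
        (deriv (fun x => α₃ x t * k₃ x t) s) s :=
      (((cα₃.differentiable one_le_inf) s).mul ((ck₃.differentiable one_le_inf) s)).hasDerivAt
    exact (h1.add h2).add h3
  -- Step D : the derivative giving N_t
  have stepD : HasDerivAt (fun x => μ₂ x • N x t + μ₃ x • B₁ x t + μ₄ x • B₂ x t)
      (μ₂ s • (k₂ s t • B₁ s t)
        + (deriv (fun x => α₁ x t) s + deriv (fun x => deriv (fun y => α₂ y t) x) s
            + deriv (fun x => α₃ x t * k₃ x t) s) • N s t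
        + μ₃ s • (k₃ s t • N s t - k₂ s t • B₂ s t) + deriv μ₃ s • B₁ s t
        + μ₄ s • (-T s t - k₃ s t • B₁ s t) + deriv μ₄ s • B₂ s t) s := by
    have h := ((dμ₂.smul (dN s)).add ((cμ₃ s).hasDerivAt.smul (dB₁ s))).add
      ((cμ₄ s).hasDerivAt.smul (dB₂ s))
    refine h.congr_deriv ?_
    ext i; simp only [Pi.add_apply, Pi.smul_apply, Pi.sub_apply, Pi.neg_apply, smul_eq_mul]; ring
  have hNt : deriv (fun y => N s y) t
      = μ₂ s • (k₂ s t • B₁ s t)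
        + (deriv (fun x => α₁ x t) s + deriv (fun x => deriv (fun y => α₂ y t) x) s
            + deriv (fun x => α₃ x t * k₃ x t) s) • N s t
        + μ₃ s • (k₃ s t • N s t - k₂ s t • B₂ s t) + deriv μ₃ s • B₁ s t
        + μ₄ s • (-T s t - k₃ s t • B₁ s t) + deriv μ₄ s • B₂ s t := by
    rw [stepC, stepD.deriv]
  -- compute ψ₂
  have hψval : ψ₂ s t
      = (deriv (fun x => α₁ x t) s + deriv (fun x => deriv (fun y => α₂ y t) x) s
          + deriv (fun x => α₃ x t * k₃ x t) s)
        + (α₂ s t * k₂ s t + deriv (fun y => α₃ y t) s - α₄ s t * k₃ s t) * k₃ s t := by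
    rw [hψ₂ s t, hNt]
    simp only [mink_add_left, mink_sub_left, mink_smul_left, mink_neg_left,
      hNB₂ s t, hB₁B₂ s t, hB₂B₂ s t, hTB₂ s t, hμ₃]
    ring
  rw [hψval]
  ring
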